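/- Let λ=(λ₁≥⋯≥λ_ℓ>0) be a partition and b=(b₁,…,b_ℓ) a vector of positive integers. Then the following identity holds in ℤ[q]: ∑_{U∈SetSSYT(λ,b)} (q−1)^{ex(U)} = ∑_{T∈SSYT(λ,b)} q^{depth(T)}. (This is the combinatorial identity underlying the paper's formula for the h-polynomial H_{v,w}(q) of covexillary Schubert varieties.) -/

import Mathlib

open scoped Classical

noncomputable section

namespace DriftKL

/-- `(i,j)` is a box of the Young diagram of `lam` (French notation, rows indexed
bottom-to-top, everything 1-indexed). -/
def InShape (lam : ℕ → ℕ) (i j : ℕ) : Prop := 1 ≤ i ∧ 1 ≤ j ∧ j ≤ lam i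

/-- `lam` encodes a partition `λ₁ ≥ ⋯ ≥ λ_ℓ > 0` (1-indexed; `0` outside `[1,ℓ]`). -/
def IsPartitionFun (ℓ : ℕ) (lam : ℕ → ℕ) : Prop :=
  (∀ i, 1 ≤ i → i ≤ ℓ → 1 ≤ lam i) ∧
  (∀ i j, 1 ≤ i → i ≤ j → j ≤ ℓ → lam j ≤ lam i) ∧
  (∀ i, i = 0 ∨ ℓ < i → lam i = 0)

/-- The Finset of boxes of the Young diagram of `lam`. -/
def shapeBoxes (ℓ : ℕ) (lam : ℕ → ℕ) : Finset (ℕ × ℕ) :=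
  (Finset.Icc 1 ℓ ×ˢ Finset.Icc 1 (lam 1)).filter (fun p => p.2 ≤ lam p.1)

/-- Semistandardness: positive entries, rows weakly increase left-to-right,
columns strictly increase bottom-to-top. -/
def IsSSYT (lam : ℕ → ℕ) (T : ℕ → ℕ → ℕ) : Prop :=
  (∀ i j, InShape lam i j → 1 ≤ T i j) ∧
  (∀ i j, InShape lam i j → InShape lam i (j+1) → T i j ≤ T i (j+1)) ∧
  (∀ i j, InShape lam i j → InShape lam (i+1) j → T i j < T (i+1) j)

/-- Flagged semistandard Young tableaux of shape `lam`, flagged by `b`,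
represented as functions vanishing off the shape. -/
def SSYTset (lam b : ℕ → ℕ) : Set (ℕ → ℕ → ℕ) :=
  {T | IsSSYT lam T ∧ (∀ i j, InShape lam i j → T i j ≤ b i) ∧
       (∀ i j, ¬ InShape lam i j → T i j = 0)}

/-- Boundary convention: `T(i,0) = 1` for `i > 0`, and `T(0,j) = 0`. -/
def TxC (T : ℕ → ℕ → ℕ) (i j : ℕ) : ℕ :=
  if i = 0 then 0 else if j = 0 then 1 else T i j

/-- The saturation `sat(T)`: `sat(T)(i,j) = [max{T(i,j-1), 1+T(i-1,j)}, T(i,j)]`. -/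
def satF (lam : ℕ → ℕ) (T : ℕ → ℕ → ℕ) (i j : ℕ) : Finset ℕ :=
  if InShape lam i j then
    Finset.Icc (max (TxC T i (j - 1)) (TxC T (i - 1) j + 1)) (T i j)
  else ∅

/-- `depth(T) = |sat(T)| - |λ|`. -/
def depthT (ℓ : ℕ) (lam : ℕ → ℕ) (T : ℕ → ℕ → ℕ) : ℕ :=
  (∑ p ∈ shapeBoxes ℓ lam, (satF lam T p.1 p.2).card) - (shapeBoxes ℓ lam).card

/-- Flagged set-valued semistandard fillings: each box carries a nonempty finite
set of positive integers bounded by the flag, such that every choice of one entry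
per box is semistandard.  Off the shape the value is `∅`. -/
def SetSSYTset (lam b : ℕ → ℕ) : Set (ℕ → ℕ → Finset ℕ) :=
  {U | (∀ i j, InShape lam i j → (U i j).Nonempty) ∧
       (∀ i j, ¬ InShape lam i j → U i j = ∅) ∧
       (∀ i j, InShape lam i j → ∀ x ∈ U i j, 1 ≤ x ∧ x ≤ b i) ∧
       (∀ T : ℕ → ℕ → ℕ, (∀ i j, InShape lam i j → T i j ∈ U i j) →
          (∀ i j, InShape lam i j → InShape lam i (j+1) → T i j ≤ T i (j+1)) ∧
          (∀ i j, InShape lam i j → InShape lam (i+1) j → T i j < T (i+1) j))}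

/-- `ex(U) = |U| - |λ|`. -/
def exU (ℓ : ℕ) (lam : ℕ → ℕ) (U : ℕ → ℕ → Finset ℕ) : ℕ :=
  (∑ p ∈ shapeBoxes ℓ lam, (U p.1 p.2).card) - (shapeBoxes ℓ lam).card

/-- For a partition `λ` and a flag `b` of positive integers,
`∑_{U ∈ SetSSYT(λ,b)} (q-1)^{ex(U)} = ∑_{T ∈ SSYT(λ,b)} q^{depth(T)}` in `ℤ[q]`. -/
-- Auxiliary lemmas
def satLB (T : ℕ → ℕ → ℕ) (i j : ℕ) : ℕ :=
  max (TxC T i (j - 1)) (TxC T (i - 1) j + 1)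

lemma one_le_satLB (T : ℕ → ℕ → ℕ) (i j : ℕ) : 1 ≤ satLB T i j :=
  le_trans (Nat.le_add_left 1 _) (le_max_right _ _)

lemma mem_shapeBoxes {ℓ : ℕ} {lam : ℕ → ℕ} (hlam : IsPartitionFun ℓ lam)
    {p : ℕ × ℕ} : p ∈ shapeBoxes ℓ lam ↔ InShape lam p.1 p.2 := by
  obtain ⟨h1, h2, h3⟩ := hlam
  simp only [shapeBoxes, Finset.mem_filter, Finset.mem_product, Finset.mem_Icc, InShape]
  constructor
  · rintro ⟨⟨⟨hi1, hiℓ⟩, hj1, hj2⟩, hj⟩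
    exact ⟨hi1, hj1, hj⟩
  · rintro ⟨hi1, hj1, hj⟩
    have hiℓ : p.1 ≤ ℓ := by
      by_contra h
      have := h3 p.1 (Or.inr (by omega))
      omega
    have : lam p.1 ≤ lam 1 := h2 1 p.1 le_rfl hi1 hiℓ
    exact ⟨⟨⟨hi1, hiℓ⟩, hj1, by omega⟩, hj⟩

lemma inShape_left {lam : ℕ → ℕ} {i j : ℕ} (h : InShape lam i j) (hj : 2 ≤ j) :
    InShape lam i (j - 1) := by
  obtain ⟨hi, hj1, hjl⟩ := h
  exact ⟨hi, by omega, by omega⟩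

lemma inShape_le_ell {ℓ : ℕ} {lam : ℕ → ℕ} (hlam : IsPartitionFun ℓ lam)
    {i j : ℕ} (h : InShape lam i j) : i ≤ ℓ := by
  obtain ⟨hi, hj1, hjl⟩ := h
  by_contra hc
  have := hlam.2.2 i (Or.inr (by omega))
  omega

lemma inShape_down {ℓ : ℕ} {lam : ℕ → ℕ} (hlam : IsPartitionFun ℓ lam)
    {i j : ℕ} (h : InShape lam i j) (hi : 2 ≤ i) : InShape lam (i - 1) j := by
  have hiℓ := inShape_le_ell hlam h
  obtain ⟨hi1, hj1, hjl⟩ := h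
  have : lam i ≤ lam (i - 1) := hlam.2.1 (i - 1) i (by omega) (by omega) hiℓ
  exact ⟨by omega, hj1, by omega⟩

-- NEW AUX

lemma satF_eq {ℓ : ℕ} {lam : ℕ → ℕ} (T : ℕ → ℕ → ℕ) {i j : ℕ}
    (h : InShape lam i j) : satF lam T i j = Finset.Icc (satLB T i j) (T i j) := by
  simp [satF, satLB, h]

/-- For a semistandard tableau, the saturation interval is nonempty. -/
lemma satLB_le {ℓ : ℕ} {lam b : ℕ → ℕ} (hlam : IsPartitionFun ℓ lam)
    {T : ℕ → ℕ → ℕ} (hT : T ∈ SSYTset lam b) {i j : ℕ} (h : InShape lam i j) :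
    satLB T i j ≤ T i j := by
  obtain ⟨⟨hpos, hrow, hcol⟩, hflag, hoff⟩ := hT
  have hij := h
  obtain ⟨hi1, hj1, hjl⟩ := hij
  have hi0 : i ≠ 0 := by omega
  have hj0 : j ≠ 0 := by omega
  apply max_le
  · by_cases hj2 : 2 ≤ j
    · have hj10 : j - 1 ≠ 0 := by omega
      have hsh := inShape_left h hj2
      have hle := hrow i (j - 1) hsh (by rwa [Nat.sub_add_cancel (by omega)])
      rw [Nat.sub_add_cancel (by omega)] at hle
      simpa [TxC, hi0, hj10] using hle
    · have hj1' : j = 1 := by omega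
      subst hj1'
      simpa [TxC, hi0] using hpos i 1 h
  · by_cases hi2 : 2 ≤ i
    · have hi10 : i - 1 ≠ 0 := by omega
      have hsh := inShape_down hlam h hi2
      have hlt := hcol (i - 1) j hsh (by rwa [Nat.sub_add_cancel (by omega)])
      rw [Nat.sub_add_cancel (by omega)] at hlt
      have h2 : TxC T (i - 1) j = T (i - 1) j := by simp [TxC, hi10, hj0]
      omega
    · have hi1' : i = 1 := by omega
      subst hi1'
      have := hpos 1 j h
      simp only [TxC]
      norm_num
      omega

/-- The max filling of a set-valued filling. -/
def maxFill (U : ℕ → ℕ → Finset ℕ) (i j : ℕ) : ℕ := (U i j).sup id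

lemma maxFill_mem {lam b : ℕ → ℕ} {U : ℕ → ℕ → Finset ℕ} (hU : U ∈ SetSSYTset lam b)
    {i j : ℕ} (h : InShape lam i j) : maxFill U i j ∈ U i j := by
  obtain ⟨i', hi', he⟩ := Finset.exists_mem_eq_sup (U i j) (hU.1 i j h) id
  rw [maxFill, he]; exact hi'

lemma le_maxFill {U : ℕ → ℕ → Finset ℕ} {i j x : ℕ} (hx : x ∈ U i j) :
    x ≤ maxFill U i j := Finset.le_sup (f := id) hx

/-- The max filling is a flagged SSYT. -/
lemma maxFill_mem_SSYTset {lam b : ℕ → ℕ} {U : ℕ → ℕ → Finset ℕ}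
    (hU : U ∈ SetSSYTset lam b) : maxFill U ∈ SSYTset lam b := by
  obtain ⟨hne, hoff, hbd, hch⟩ := hU
  have hmem : ∀ i j, InShape lam i j → maxFill U i j ∈ U i j :=
    fun i j h => maxFill_mem ⟨hne, hoff, hbd, hch⟩ h
  obtain ⟨hrow, hcol⟩ := hch (maxFill U) hmem
  refine ⟨⟨?_, hrow, hcol⟩, ?_, ?_⟩
  · intro i j h; exact (hbd i j h _ (hmem i j h)).1
  · intro i j h
    exact Finset.sup_le fun x hx => (hbd i j h x hx).2
  · intro i j h
    simp [maxFill, hoff i j h]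

/-- Key: all entries of a set-valued filling lie in the saturation interval of its max filling. -/
lemma mem_Icc_of_mem {ℓ : ℕ} {lam b : ℕ → ℕ} (hlam : IsPartitionFun ℓ lam)
    {U : ℕ → ℕ → Finset ℕ} (hU : U ∈ SetSSYTset lam b)
    {i j x : ℕ} (h : InShape lam i j) (hx : x ∈ U i j) :
    x ∈ Finset.Icc (satLB (maxFill U) i j) (maxFill U i j) := by
  obtain ⟨hne, hoff, hbd, hch⟩ := hU
  have hU' : U ∈ SetSSYTset lam b := ⟨hne, hoff, hbd, hch⟩
  rw [Finset.mem_Icc]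
  refine ⟨?_, le_maxFill hx⟩
  set M := maxFill U with hM
  set T' : ℕ → ℕ → ℕ := fun a c => if (a, c) = (i, j) then x else M a c with hT'
  have hT'ij : T' i j = x := by simp [hT']
  have hT'mem : ∀ a c, InShape lam a c → T' a c ∈ U a c := by
    intro a c hac
    by_cases hx' : (a, c) = (i, j)
    · have ha : a = i := congrArg Prod.fst hx'
      have hc : c = j := congrArg Prod.snd hx'
      subst ha; subst hc
      simpa [hT'] using hx
    · simp only [hT', hx', if_false]
      exact maxFill_mem hU' hac
  obtain ⟨hrow, hcol⟩ := hch T' hT'mem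
  obtain ⟨hi1, hj1, hjl⟩ := h
  have hi0 : i ≠ 0 := by omega
  have hj0 : j ≠ 0 := by omega
  apply max_le
  · by_cases hj2 : 2 ≤ j
    · have hj10 : j - 1 ≠ 0 := by omega
      have hsh := inShape_left ⟨hi1, hj1, hjl⟩ hj2
      have hle := hrow i (j - 1) hsh
        (by rw [Nat.sub_add_cancel (by omega)]; exact ⟨hi1, hj1, hjl⟩)
      rw [Nat.sub_add_cancel (by omega)] at hle
      have h1 : T' i (j - 1) = M i (j - 1) :=
        if_neg (by simp only [Prod.mk.injEq]; omega)
      rw [h1, hT'ij] at hle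
      simpa [TxC, hi0, hj10] using hle
    · have hj1' : j = 1 := by omega
      subst hj1'
      have := (hbd i 1 ⟨hi1, hj1, hjl⟩ x hx).1
      simpa [TxC, hi0] using this
  · by_cases hi2 : 2 ≤ i
    · have hi10 : i - 1 ≠ 0 := by omega
      have hsh := inShape_down hlam ⟨hi1, hj1, hjl⟩ hi2
      have hlt := hcol (i - 1) j hsh
        (by rw [Nat.sub_add_cancel (by omega)]; exact ⟨hi1, hj1, hjl⟩)
      rw [Nat.sub_add_cancel (by omega)] at hlt
      have h1 : T' (i - 1) j = M (i - 1) j :=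
        if_neg (by simp only [Prod.mk.injEq]; omega)
      rw [h1, hT'ij] at hlt
      have h3 : TxC M (i - 1) j = M (i - 1) j := by simp [TxC, hi10, hj0]
      omega
    · have hi1' : i = 1 := by omega
      subst hi1'
      have := (hbd 1 j ⟨hi1, hj1, hjl⟩ x hx).1
      simp only [TxC]
      norm_num
      omega

/-- Characterization of the fiber of `maxFill` over a tableau `T`. -/
lemma fiber_iff {ℓ : ℕ} {lam b : ℕ → ℕ} (hlam : IsPartitionFun ℓ lam)
    {T : ℕ → ℕ → ℕ} (hT : T ∈ SSYTset lam b) (U : ℕ → ℕ → Finset ℕ) :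
    (U ∈ SetSSYTset lam b ∧ maxFill U = T) ↔
    ((∀ i j, InShape lam i j →
        T i j ∈ U i j ∧ U i j ⊆ Finset.Icc (satLB T i j) (T i j)) ∧
      (∀ i j, ¬ InShape lam i j → U i j = ∅)) := by
  constructor
  · rintro ⟨hU, rfl⟩
    refine ⟨fun i j h => ⟨maxFill_mem hU h, fun x hx => mem_Icc_of_mem hlam hU h hx⟩,
      hU.2.1⟩
  · rintro ⟨hin, hoff⟩
    have hb1 : ∀ i j, InShape lam i j → ∀ x ∈ U i j,
        satLB T i j ≤ x ∧ x ≤ T i j := by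
      intro i j h x hx
      have := (hin i j h).2 hx
      rw [Finset.mem_Icc] at this
      exact this
    have hUmem : U ∈ SetSSYTset lam b := by
      refine ⟨fun i j h => ⟨T i j, (hin i j h).1⟩, hoff, ?_, ?_⟩
      · intro i j h x hx
        obtain ⟨hlb, hub⟩ := hb1 i j h x hx
        exact ⟨le_trans (one_le_satLB T i j) hlb, le_trans hub (hT.2.1 i j h)⟩
      · intro T'' hT''
        constructor
        · intro i j h h'
          obtain ⟨hi1, hj1, hjl⟩ := h
          have h1 : T'' i j ≤ T i j := (hb1 i j ⟨hi1, hj1, hjl⟩ _ (hT'' i j ⟨hi1, hj1, hjl⟩)).2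
          have h2 : satLB T i (j+1) ≤ T'' i (j+1) := (hb1 i (j+1) h' _ (hT'' i (j+1) h')).1
          have h3 : TxC T i ((j+1) - 1) ≤ satLB T i (j+1) := le_max_left _ _
          have hi0 : i ≠ 0 := by omega
          have hj0 : j ≠ 0 := by omega
          have h4 : TxC T i ((j+1) - 1) = T i j := by simp [TxC, hi0, hj0]
          omega
        · intro i j h h'
          obtain ⟨hi1, hj1, hjl⟩ := h
          have h1 : T'' i j ≤ T i j := (hb1 i j ⟨hi1, hj1, hjl⟩ _ (hT'' i j ⟨hi1, hj1, hjl⟩)).2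
          have h2 : satLB T (i+1) j ≤ T'' (i+1) j := (hb1 (i+1) j h' _ (hT'' (i+1) j h')).1
          have h3 : TxC T ((i+1) - 1) j + 1 ≤ satLB T (i+1) j := le_max_right _ _
          have hi0 : i ≠ 0 := by omega
          have hj0 : j ≠ 0 := by omega
          have h4 : TxC T ((i+1) - 1) j = T i j := by simp [TxC, hi0, hj0]
          omega
    refine ⟨hUmem, ?_⟩
    funext i j
    by_cases h : InShape lam i j
    · refine le_antisymm ?_ (le_maxFill (hin i j h).1)
      exact Finset.sup_le fun x hx => (hb1 i j h x hx).2
    · simp [maxFill, hoff i j h, hT.2.2 i j h]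

lemma finite_SSYTset {ℓ : ℕ} {lam b : ℕ → ℕ} (hlam : IsPartitionFun ℓ lam) :
    (SSYTset lam b).Finite := by
  classical
  set S := shapeBoxes ℓ lam with hS
  set N := (Finset.Icc 1 ℓ).sup b with hN
  set f : (ℕ → ℕ → ℕ) → ({x // x ∈ S} → ℕ) := fun T p => T p.1.1 p.1.2 with hf
  have himg : (f '' SSYTset lam b).Finite := by
    apply Set.Finite.subset (Set.Finite.pi (fun _ : {x // x ∈ S} => Set.finite_Iic N))
    rintro g ⟨T, hT, rfl⟩
    rw [Set.mem_univ_pi]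
    intro p
    rw [Set.mem_Iic]
    have hsh : InShape lam p.1.1 p.1.2 := (mem_shapeBoxes hlam).mp p.2
    have h1 : T p.1.1 p.1.2 ≤ b p.1.1 := hT.2.1 _ _ hsh
    have h2 : b p.1.1 ≤ N :=
      Finset.le_sup (by rw [Finset.mem_Icc]; exact ⟨hsh.1, inShape_le_ell hlam hsh⟩)
    exact le_trans h1 h2
  apply Set.Finite.of_finite_image himg
  intro T1 h1 T2 h2 heq
  funext i j
  by_cases h : InShape lam i j
  · have hp : (i, j) ∈ S := (mem_shapeBoxes hlam).mpr h
    exact congrFun heq ⟨(i, j), hp⟩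
  · rw [h1.2.2 i j h, h2.2.2 i j h]

lemma finite_SetSSYTset {ℓ : ℕ} {lam b : ℕ → ℕ} (hlam : IsPartitionFun ℓ lam) :
    (SetSSYTset lam b).Finite := by
  classical
  set S := shapeBoxes ℓ lam with hS
  set N := (Finset.Icc 1 ℓ).sup b with hN
  set f : (ℕ → ℕ → Finset ℕ) → ({x // x ∈ S} → Finset ℕ) := fun U p => U p.1.1 p.1.2 with hf
  have himg : (f '' SetSSYTset lam b).Finite := by
    apply Set.Finite.subset
      (Set.Finite.pi (fun _ : {x // x ∈ S} => (Finset.Icc 1 N).powerset.finite_toSet))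
    rintro g ⟨U, hU, rfl⟩
    rw [Set.mem_univ_pi]
    intro p
    rw [Finset.mem_coe, Finset.mem_powerset]
    have hsh : InShape lam p.1.1 p.1.2 := (mem_shapeBoxes hlam).mp p.2
    intro x hx
    obtain ⟨hx1, hx2⟩ := hU.2.2.1 _ _ hsh x hx
    have h2 : b p.1.1 ≤ N :=
      Finset.le_sup (by rw [Finset.mem_Icc]; exact ⟨hsh.1, inShape_le_ell hlam hsh⟩)
    rw [Finset.mem_Icc]
    exact ⟨hx1, le_trans hx2 h2⟩
  apply Set.Finite.of_finite_image himg
  intro U1 h1 U2 h2 heq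
  funext i j
  by_cases h : InShape lam i j
  · have hp : (i, j) ∈ S := (mem_shapeBoxes hlam).mpr h
    exact congrFun heq ⟨(i, j), hp⟩
  · rw [h1.2.1 i j h, h2.2.1 i j h]

lemma sum_pred {ι : Type*} (s : Finset ι) (f : ι → ℕ) (h : ∀ i ∈ s, 1 ≤ f i) :
    ∑ i ∈ s, f i - s.card = ∑ i ∈ s, (f i - 1) := by
  have h1 : ∑ i ∈ s, f i = ∑ i ∈ s, ((f i - 1) + 1) :=
    Finset.sum_congr rfl (fun i hi => by have := h i hi; omega)
  rw [h1, Finset.sum_add_distrib, Finset.sum_const, smul_eq_mul, mul_one]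
  omega

lemma sum_pow_powerset {R : Type*} [CommRing R] (y : R) (G : Finset ℕ) :
    ∑ s ∈ G.powerset, y ^ s.card = (y + 1) ^ G.card := by
  classical
  have h := Finset.prod_add (fun _ : ℕ => y) (fun _ : ℕ => (1 : R)) G
  simp only [Finset.prod_const, one_pow, mul_one] at h
  rw [← h]

lemma sum_pow_powerset_filter {R : Type*} [CommRing R] (y : R) (F : Finset ℕ) {a : ℕ}
    (ha : a ∈ F) :
    ∑ s ∈ F.powerset.filter (fun s => a ∈ s), y ^ (s.card - 1)
      = (y + 1) ^ (F.card - 1) := by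
  classical
  have h1 : ∑ s ∈ F.powerset.filter (fun s => a ∈ s), y ^ (s.card - 1)
      = ∑ t ∈ (F.erase a).powerset, y ^ t.card := by
    refine Finset.sum_nbij' (fun s => s.erase a) (fun t => insert a t) ?_ ?_ ?_ ?_ ?_
    · intro s hs
      rw [Finset.mem_filter, Finset.mem_powerset] at hs
      rw [Finset.mem_powerset]
      exact Finset.erase_subset_erase a hs.1
    · intro t ht
      rw [Finset.mem_powerset] at ht
      rw [Finset.mem_filter, Finset.mem_powerset]
      refine ⟨Finset.insert_subset ha (ht.trans (Finset.erase_subset a F)), Finset.mem_insert_self a t⟩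
    · intro s hs
      rw [Finset.mem_filter] at hs
      exact Finset.insert_erase hs.2
    · intro t ht
      rw [Finset.mem_powerset] at ht
      exact Finset.erase_insert (fun hc => (Finset.notMem_erase a F) (ht hc))
    · intro s hs
      rw [Finset.mem_filter] at hs
      rw [Finset.card_erase_of_mem hs.2]
  rw [h1, sum_pow_powerset, Finset.card_erase_of_mem ha]

theorem statement0 (ℓ : ℕ) (lam b : ℕ → ℕ)
    (hlam : IsPartitionFun ℓ lam)
    (hb : ∀ i, 1 ≤ i → i ≤ ℓ → 1 ≤ b i) :
    ∑ᶠ U ∈ SetSSYTset lam b, ((Polynomial.X : Polynomial ℤ) - 1) ^ exU ℓ lam U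
      = ∑ᶠ T ∈ SSYTset lam b, (Polynomial.X : Polynomial ℤ) ^ depthT ℓ lam T := by
  classical
  have hAfin : (SetSSYTset lam b).Finite := finite_SetSSYTset hlam
  have hBfin : (SSYTset lam b).Finite := finite_SSYTset hlam
  rw [finsum_mem_eq_finite_toFinset_sum _ hAfin, finsum_mem_eq_finite_toFinset_sum _ hBfin]
  set S := shapeBoxes ℓ lam with hS
  have hmaps : ∀ U ∈ hAfin.toFinset, maxFill U ∈ hBfin.toFinset := by
    intro U hU
    rw [Set.Finite.mem_toFinset] at hU ⊢
    exact maxFill_mem_SSYTset hU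
  rw [← Finset.sum_fiberwise_of_maps_to hmaps
    (fun U => ((Polynomial.X : Polynomial ℤ) - 1) ^ exU ℓ lam U)]
  apply Finset.sum_congr rfl
  intro T hTmem
  have hT : T ∈ SSYTset lam b := hBfin.mem_toFinset.mp hTmem
  set X : Polynomial ℤ := Polynomial.X with hX
  set t : ℕ × ℕ → Finset (Finset ℕ) :=
    fun p => (satF lam T p.1 p.2).powerset.filter (fun s => T p.1 p.2 ∈ s) with ht
  have hamem : ∀ p ∈ S, T p.1 p.2 ∈ satF lam T p.1 p.2 := by
    intro p hp
    have hsh := (mem_shapeBoxes hlam).mp hp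
    rw [satF_eq (ℓ := ℓ) T hsh, Finset.mem_Icc]
    exact ⟨satLB_le hlam hT hsh, le_rfl⟩
  have hcard1 : ∀ p ∈ S, 1 ≤ (satF lam T p.1 p.2).card := by
    intro p hp
    exact Finset.card_pos.mpr ⟨_, hamem p hp⟩
  -- RHS as a product
  have hdepth : X ^ depthT ℓ lam T = ∏ p ∈ S, X ^ ((satF lam T p.1 p.2).card - 1) := by
    rw [depthT, ← hS, sum_pred _ _ hcard1, ← Finset.prod_pow_eq_pow_sum]
  -- per-box sums
  have hbox : ∀ p ∈ S, ∑ s ∈ t p, (X - 1) ^ (s.card - 1)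
      = X ^ ((satF lam T p.1 p.2).card - 1) := by
    intro p hp
    rw [ht]
    rw [sum_pow_powerset_filter (X - 1) _ (hamem p hp)]
    congr 1
    ring
  -- expand the product as a sum over the pi set
  have hexp : ∏ p ∈ S, ∑ s ∈ t p, (X - 1) ^ (s.card - 1)
      = ∑ g ∈ S.pi (fun p => t p), ∏ x ∈ S.attach, (X - 1) ^ ((g x.1 x.2).card - 1) :=
    Finset.prod_sum S (fun p => t p) (fun _ s => (X - 1) ^ (s.card - 1))
  -- the fiber sum equals the pi-set sum
  have hfib : ∑ U ∈ hAfin.toFinset.filter (fun U => maxFill U = T),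
        (X - 1) ^ exU ℓ lam U
      = ∑ g ∈ S.pi (fun p => t p), ∏ x ∈ S.attach, (X - 1) ^ ((g x.1 x.2).card - 1) := by
    refine Finset.sum_nbij'
      (fun U => fun (p : ℕ × ℕ) (_ : p ∈ S) => U p.1 p.2)
      (fun g => fun i j => if h : (i, j) ∈ S then g (i, j) h else ∅)
      ?_ ?_ ?_ ?_ ?_
    · -- maps into the pi set
      intro U hU
      rw [Finset.mem_filter, Set.Finite.mem_toFinset] at hU
      obtain ⟨hin, hoff⟩ := (fiber_iff hlam hT U).mp hU
      rw [Finset.mem_pi]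
      intro p hp
      have hsh := (mem_shapeBoxes hlam).mp hp
      obtain ⟨hmem, hsub⟩ := hin p.1 p.2 hsh
      rw [ht]
      rw [Finset.mem_filter, Finset.mem_powerset]
      rw [satF_eq (ℓ := ℓ) T hsh]
      exact ⟨hsub, hmem⟩
    · -- inverse maps into the fiber
      intro g hg
      rw [Finset.mem_pi] at hg
      rw [Finset.mem_filter, Set.Finite.mem_toFinset]
      apply (fiber_iff hlam hT _).mpr
      constructor
      · intro i j h
        have hp : (i, j) ∈ S := (mem_shapeBoxes hlam).mpr h
        have := hg (i, j) hp
        rw [ht, Finset.mem_filter, Finset.mem_powerset, satF_eq (ℓ := ℓ) T h] at this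
        simp only [hp, dif_pos]
        exact ⟨this.2, this.1⟩
      · intro i j h
        have hp : (i, j) ∉ S := fun hc => h ((mem_shapeBoxes hlam).mp hc)
        simp only [hp, dif_neg, not_false_iff]
    · -- left inverse
      intro U hU
      rw [Finset.mem_filter, Set.Finite.mem_toFinset] at hU
      funext i j
      by_cases h : (i, j) ∈ S
      · simp only [h, dif_pos]
      · simp only [h, dif_neg, not_false_iff]
        exact (hU.1.2.1 i j (fun hc => h ((mem_shapeBoxes hlam).mpr hc))).symm
    · -- right inverse
      intro g hg
      funext p hp
      simp only [hp, dif_pos]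
    · -- summands agree
      intro U hU
      rw [Finset.mem_filter, Set.Finite.mem_toFinset] at hU
      obtain ⟨hin, hoff⟩ := (fiber_iff hlam hT U).mp hU
      have hc1 : ∀ p ∈ S, 1 ≤ (U p.1 p.2).card := by
        intro p hp
        have hsh := (mem_shapeBoxes hlam).mp hp
        exact Finset.card_pos.mpr ⟨_, (hin p.1 p.2 hsh).1⟩
      rw [exU, ← hS, sum_pred _ _ hc1, ← Finset.prod_pow_eq_pow_sum]
      rw [← Finset.prod_attach S (fun p => (X - 1) ^ ((U p.1 p.2).card - 1))]
  rw [hfib, ← hexp, hdepth]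
  exact Finset.prod_congr rfl hbox

end DriftKL
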